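/- Let A, B, X be n×n complex matrices with A and B positive definite, let λ₁,…,λₙ be the eigenvalues of A and ν₁,…,νₙ the eigenvalues of B, and set K̲ = min{ K((λᵢ/νⱼ)^{1/2}, 2) : i, j = 1,…,n }. If 0 < v ≤ 1/2, then ‖(1 − v)AX + vXB‖_F² − v²‖AX − XB‖_F² ≥ r₁‖A^{1/2} X B^{1/2} − AX‖_F² + K̲^{r̂₁} ‖A^{1−v} X B^{v}‖_F², where r = min{v, 1 − v}, r₁ = min{2r, 1 − 2r} and r̂₁ = min{2r₁, 1 − 2r₁}. -/

import Mathlib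

open Matrix
open scoped ComplexOrder

/-- Real power of a matrix, defined for Hermitian matrices via the spectral
decomposition (functional calculus); junk value otherwise. -/
noncomputable def mrpow {n : ℕ} (A : Matrix (Fin n) (Fin n) ℂ) (t : ℝ) :
    Matrix (Fin n) (Fin n) ℂ :=
  if h : A.IsHermitian then
    (h.eigenvectorUnitary : Matrix (Fin n) (Fin n) ℂ)
      * Matrix.diagonal (fun i => ((h.eigenvalues i ^ t : ℝ) : ℂ))
      * star (h.eigenvectorUnitary : Matrix (Fin n) (Fin n) ℂ)
  else A

/-- The squared Hilbert-Schmidt (Frobenius) norm `‖A‖_F^2`. -/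
noncomputable def frobSq {n : ℕ} (A : Matrix (Fin n) (Fin n) ℂ) : ℝ :=
  ∑ i : Fin n, ∑ j : Fin n, ‖A i j‖ ^ 2

/-- The Kantorovich constant `K(t, 2) = (t + 1)^2 / (4 t)`. -/
noncomputable def Kant (t : ℝ) : ℝ := (t + 1) ^ 2 / (4 * t)

lemma one_le_Kant {t : ℝ} (ht : 0 < t) : 1 ≤ Kant t := by
  unfold Kant
  rw [le_div_iff₀ (by positivity)]
  nlinarith [sq_nonneg (t - 1)]

lemma kant_inv {t : ℝ} (ht : 0 < t) : Kant t⁻¹ = Kant t := by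
  unfold Kant
  field_simp
  ring

lemma zsf_half {x y s : ℝ} (hx : 0 < x) (hy : 0 < y) (hs0 : 0 ≤ s) (hs : s ≤ 1/2) :
    Kant (y/x) ^ s * (x ^ (1-s) * y ^ s) ≤ (1-s)*x + s*y := by
  set h := y / x with hh
  have hhpos : 0 < h := div_pos hy hx
  have hK0 : (0:ℝ) ≤ Kant h := le_trans zero_le_one (one_le_Kant hhpos)
  have hy' : y = x * h := by rw [hh, mul_div_assoc', mul_div_cancel_left₀ y hx.ne']
  have key : Kant h * h = ((h+1)/2)^2 := by
    unfold Kant; field_simp; ring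
  have e1 : Kant h ^ s * (x ^ (1-s) * y ^ s) = (Kant h ^ s * h ^ s) * (x ^ (1-s) * x ^ s) := by
    rw [hy', Real.mul_rpow hx.le hhpos.le]; ring
  have e2 : x ^ (1-s) * x ^ s = x := by
    rw [← Real.rpow_add hx]; norm_num
  have e3 : Kant h ^ s * h ^ s = ((h+1)/2) ^ (2*s) := by
    rw [← Real.mul_rpow hK0 hhpos.le, key, ← Real.rpow_natCast ((h+1)/2) 2,
        ← Real.rpow_mul (by positivity)]
    norm_num [mul_comm]
  have bern : ((h+1)/2) ^ (2*s) ≤ 1 - s + s * h := by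
    have hb := Real.geom_mean_le_arith_mean2_weighted (w₁ := 1-2*s) (w₂ := 2*s)
      (p₁ := 1) (p₂ := (h+1)/2) (by linarith) (by linarith) zero_le_one (by positivity)
      (by ring)
    rw [Real.one_rpow] at hb
    linarith
  calc Kant h ^ s * (x ^ (1-s) * y ^ s) = ((h+1)/2) ^ (2*s) * x := by rw [e1, e2, e3]
    _ ≤ (1 - s + s*h) * x := mul_le_mul_of_nonneg_right bern hx.le
    _ = (1-s)*x + s*y := by rw [hy']; ring

lemma zsf {x y s : ℝ} (hx : 0 < x) (hy : 0 < y) (hs0 : 0 ≤ s) (hs1 : s ≤ 1) :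
    Kant (y/x) ^ min s (1-s) * (x ^ (1-s) * y ^ s) ≤ (1-s)*x + s*y := by
  rcases le_or_gt s (1/2) with hc | hc
  · rw [min_eq_left (by linarith)]
    exact zsf_half hx hy hs0 hc
  · rw [min_eq_right (by linarith)]
    have h2 := zsf_half hy hx (s := 1 - s) (by linarith) (by linarith)
    have harg : Kant (x/y) = Kant (y/x) := by
      rw [show x/y = (y/x)⁻¹ by rw [inv_div], kant_inv (div_pos hy hx)]
    rw [harg, show (1:ℝ) - (1-s) = s by ring] at h2
    calc Kant (y/x) ^ (1-s) * (x ^ (1-s) * y ^ s)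
        = Kant (y/x) ^ (1-s) * (y ^ s * x ^ (1-s)) := by ring
      _ ≤ s*y + (1-s)*x := h2
      _ = (1-s)*x + s*y := by ring

lemma frobSq_eq_trace {n : ℕ} (M : Matrix (Fin n) (Fin n) ℂ) :
    ((frobSq M : ℝ) : ℂ) = Matrix.trace (Mᴴ * M) := by
  unfold frobSq Matrix.trace
  push_cast
  rw [Finset.sum_comm]
  refine Finset.sum_congr rfl fun i _ => ?_
  rw [Matrix.diag, Matrix.mul_apply]
  refine Finset.sum_congr rfl fun j _ => ?_
  rw [Matrix.conjTranspose_apply, Complex.star_def, ← Complex.normSq_eq_conj_mul_self,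
    ← Complex.sq_norm]
  norm_cast

lemma frobSq_conj {n : ℕ} {u w : Matrix (Fin n) (Fin n) ℂ}
    (hu : star u * u = 1) (hw : star w * w = 1) (M : Matrix (Fin n) (Fin n) ℂ) :
    frobSq (u * M * star w) = frobSq M := by
  have h1 : (u * M * star w)ᴴ * (u * M * star w) = w * (Mᴴ * M) * star w := by
    simp only [Matrix.star_eq_conjTranspose] at hu hw ⊢
    calc (u * M * wᴴ)ᴴ * (u * M * wᴴ)
        = w * (Mᴴ * ((uᴴ * u) * (M * wᴴ))) := by
          simp only [Matrix.conjTranspose_mul, Matrix.conjTranspose_conjTranspose,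
            Matrix.mul_assoc]
      _ = w * (Mᴴ * M) * wᴴ := by rw [hu]; simp [Matrix.mul_assoc]
  have h2 : Matrix.trace (w * (Mᴴ * M) * star w) = Matrix.trace (Mᴴ * M) := by
    rw [Matrix.trace_mul_cycle, ← Matrix.mul_assoc, hw, Matrix.one_mul]
  have := (frobSq_eq_trace (u * M * star w)).trans (by rw [h1, h2])
  exact_mod_cast this.trans (frobSq_eq_trace M).symm

lemma scalar_main {a b v k r1 rh1 : ℝ} (ha : 0 < a) (hb : 0 < b)
    (hv0 : 0 < v) (hv : v ≤ 1/2)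
    (hr1 : r1 = min (2*v) (1-2*v)) (hrh1 : rh1 = min (2*r1) (1-2*r1))
    (hk0 : 0 ≤ k) (hk : k ≤ Kant (Real.sqrt (a/b))) :
    r1 * (Real.sqrt (a*b) - a)^2 + k ^ rh1 * (a ^ (1-v) * b ^ v)^2
      ≤ ((1-v)*a + v*b)^2 - v^2*(a-b)^2 := by
  have hab : 0 < a * b := mul_pos ha hb
  set sab := Real.sqrt (a*b) with hsabdef
  have hsab : 0 < sab := Real.sqrt_pos.2 hab
  have hs2 : sab^2 = a*b := Real.sq_sqrt hab.le
  have hsm : sab = Real.sqrt a * Real.sqrt b := Real.sqrt_mul ha.le b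
  have hra : Real.sqrt a * Real.sqrt a = a := Real.mul_self_sqrt ha.le
  have hrb : Real.sqrt b * Real.sqrt b = b := Real.mul_self_sqrt hb.le
  have hrapos : 0 < Real.sqrt a := Real.sqrt_pos.2 ha
  have hrbpos : 0 < Real.sqrt b := Real.sqrt_pos.2 hb
  have hKsym : Kant (Real.sqrt (a/b)) = Kant (Real.sqrt (b/a)) := by
    have h1 : Real.sqrt (a/b) = (Real.sqrt (b/a))⁻¹ := by
      rw [show a/b = (b/a)⁻¹ by rw [inv_div], Real.sqrt_inv]
    rw [h1, kant_inv (Real.sqrt_pos.2 (div_pos hb ha))]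
  have hba : Real.sqrt (b/a) = Real.sqrt b / Real.sqrt a := Real.sqrt_div hb.le a
  have hr1nn : 0 ≤ r1 := by
    rw [hr1]; exact le_min (by linarith) (by linarith)
  have hr1le : r1 ≤ 1/2 := by
    rw [hr1]; rcases le_total (2*v) (1-2*v) with h|h
    · rw [min_eq_left h]; linarith
    · rw [min_eq_right h]; linarith
  have hrh1nn : 0 ≤ rh1 := by
    rw [hrh1]; exact le_min (by linarith) (by linarith)
  have hKpos : (0:ℝ) < Kant (Real.sqrt (b/a)) :=
    lt_of_lt_of_le one_pos (one_le_Kant (Real.sqrt_pos.2 (div_pos hb ha)))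
  have hKk : k ^ rh1 ≤ Kant (Real.sqrt (b/a)) ^ rh1 :=
    Real.rpow_le_rpow hk0 (hk.trans_eq hKsym) hrh1nn
  have hT : (a ^ (1-v) * b ^ v)^2 = a^(2-2*v) * b^(2*v) := by
    rw [mul_pow, sq, sq, ← Real.rpow_add ha, ← Real.rpow_add hb,
      show (1-v)+(1-v) = 2-2*v by ring, show v+v = 2*v by ring]
  have hT0 : (0:ℝ) ≤ (a ^ (1-v) * b ^ v)^2 := sq_nonneg _
  have step1 : r1 * (sab - a)^2 + k ^ rh1 * (a ^ (1-v) * b ^ v)^2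
      ≤ r1 * (sab - a)^2 + Kant (Real.sqrt (b/a)) ^ rh1 * (a^(2-2*v) * b^(2*v)) := by
    rw [← hT]
    exact add_le_add_right (mul_le_mul_of_nonneg_right hKk hT0) _
  refine le_trans step1 ?_
  rcases le_total v (1/4) with hc | hc
  · -- r1 = 2v
    have hr1v : r1 = 2*v := by rw [hr1, min_eq_left (by linarith)]
    have hrh1v : min (4*v) (1-4*v) = rh1 := by
      rw [hrh1, hr1v]; congr 1 <;> ring
    have hz := zsf (x := a*a) (y := a*sab) (s := 4*v)
      (by positivity) (by positivity) (by linarith) (by linarith)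
    have harg : (a*sab)/(a*a) = Real.sqrt (b/a) := by
      rw [hsm, hba, div_eq_div_iff (by positivity) hrapos.ne']
      linear_combination (a * Real.sqrt b) * hra
    have hpow : (a*a)^(1-4*v) * (a*sab)^(4*v) = a^(2-2*v)*b^(2*v) := by
      rw [Real.rpow_def_of_pos (by positivity), Real.rpow_def_of_pos (by positivity),
        Real.rpow_def_of_pos ha, Real.rpow_def_of_pos hb, ← Real.exp_add, ← Real.exp_add]
      congr 1
      rw [Real.log_mul ha.ne' ha.ne', Real.log_mul ha.ne' hsab.ne', hsabdef,
        Real.log_sqrt hab.le, Real.log_mul ha.ne' hb.ne']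
      ring
    rw [harg, hrh1v, hpow] at hz
    have key : ((1-v)*a + v*b)^2 - v^2*(a-b)^2 - (2*v)*(sab - a)^2
        = (1-4*v)*(a*a) + (4*v)*(a*sab) := by
      linear_combination (-(2*v)) * hs2
    rw [hr1v]
    linarith [hz, key]
  · -- r1 = 1 - 2v
    have hr1v : r1 = 1-2*v := by rw [hr1, min_eq_right (by linarith)]
    have hrh1v : min (4*v-1) (1-(4*v-1)) = rh1 := by
      rw [hrh1, hr1v, min_comm]; congr 1 <;> ring
    have hz := zsf (x := a*sab) (y := a*b) (s := 4*v-1)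
      (by positivity) (by positivity) (by linarith) (by linarith)
    have harg : (a*b)/(a*sab) = Real.sqrt (b/a) := by
      rw [hsm, hba, div_eq_div_iff (by positivity) hrapos.ne']
      linear_combination (-(a * Real.sqrt a)) * hrb
    have hpow : (a*sab)^(1-(4*v-1)) * (a*b)^(4*v-1) = a^(2-2*v)*b^(2*v) := by
      rw [Real.rpow_def_of_pos (by positivity), Real.rpow_def_of_pos (by positivity),
        Real.rpow_def_of_pos ha, Real.rpow_def_of_pos hb, ← Real.exp_add, ← Real.exp_add]
      congr 1
      rw [Real.log_mul ha.ne' hsab.ne', hsabdef, Real.log_sqrt hab.le,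
        Real.log_mul ha.ne' hb.ne']
      ring
    rw [harg, hrh1v, hpow] at hz
    have key : ((1-v)*a + v*b)^2 - v^2*(a-b)^2 - (1-2*v)*(sab - a)^2
        = (1-(4*v-1))*(a*sab) + (4*v-1)*(a*b) := by
      linear_combination (2*v-1) * hs2
    rw [hr1v]
    linarith [hz, key]

theorem stmt_16 {n : ℕ} (A B X : Matrix (Fin n) (Fin n) ℂ) (v Kmin r r1 rh1 : ℝ)
    (hn : 0 < n) (hA : A.PosDef) (hB : B.PosDef)
    (hK : Kmin = sInf (Set.range fun p : Fin n × Fin n =>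
      Kant (Real.sqrt (hA.1.eigenvalues p.1 / hB.1.eigenvalues p.2))))
    (hr : r = min v (1 - v)) (hr1 : r1 = min (2 * r) (1 - 2 * r))
    (hrh1 : rh1 = min (2 * r1) (1 - 2 * r1))
    (hv0 : 0 < v) (hv : v ≤ 1 / 2) :
    frobSq (((1 - v : ℝ) : ℂ) • (A * X) + ((v : ℝ) : ℂ) • (X * B))
        - v ^ 2 * frobSq (A * X - X * B) ≥
      r1 * frobSq (mrpow A (1 / 2) * X * mrpow B (1 / 2) - A * X)
        + Kmin ^ rh1 * frobSq (mrpow A (1 - v) * X * mrpow B v) := by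
  have hrv : r = v := by rw [hr, min_eq_left (by linarith)]
  rw [hrv] at hr1
  -- eigen data
  set d := hA.1.eigenvalues with hd_def
  set e := hB.1.eigenvalues with he_def
  have hd : ∀ i, 0 < d i := fun i => hA.eigenvalues_pos i
  have he : ∀ i, 0 < e i := fun i => hB.eigenvalues_pos i
  set u : Matrix (Fin n) (Fin n) ℂ := (hA.1.eigenvectorUnitary : Matrix (Fin n) (Fin n) ℂ)
    with hu_def
  set w : Matrix (Fin n) (Fin n) ℂ := (hB.1.eigenvectorUnitary : Matrix (Fin n) (Fin n) ℂ)
    with hw_def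
  have huu : star u * u = 1 := mem_unitaryGroup_iff'.mp hA.1.eigenvectorUnitary.2
  have huu' : u * star u = 1 := mem_unitaryGroup_iff.mp hA.1.eigenvectorUnitary.2
  have hww : star w * w = 1 := mem_unitaryGroup_iff'.mp hB.1.eigenvectorUnitary.2
  have hww' : w * star w = 1 := mem_unitaryGroup_iff.mp hB.1.eigenvectorUnitary.2
  set Y : Matrix (Fin n) (Fin n) ℂ := star u * X * w with hY_def
  -- diagonal pieces
  have hAspec : A = u * Matrix.diagonal (fun i => ((d i : ℝ) : ℂ)) * star u :=
    hA.1.spectral_theorem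
  have hBspec : B = w * Matrix.diagonal (fun i => ((e i : ℝ) : ℂ)) * star w :=
    hB.1.spectral_theorem
  have hmrA : ∀ t : ℝ, mrpow A t
      = u * Matrix.diagonal (fun i => ((d i ^ t : ℝ) : ℂ)) * star u := by
    intro t; rw [mrpow, dif_pos hA.1]
  have hmrB : ∀ t : ℝ, mrpow B t
      = w * Matrix.diagonal (fun i => ((e i ^ t : ℝ) : ℂ)) * star w := by
    intro t; rw [mrpow, dif_pos hB.1]
  -- structural equalities
  have EAX : A * X = u * (Matrix.diagonal (fun i => ((d i : ℝ) : ℂ)) * Y) * star w := by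
    rw [hAspec, hY_def]
    calc u * Matrix.diagonal (fun i => ((d i : ℝ) : ℂ)) * star u * X
        = u * Matrix.diagonal (fun i => ((d i : ℝ) : ℂ)) * star u * X * 1 := by
          rw [Matrix.mul_one]
      _ = u * (Matrix.diagonal (fun i => ((d i : ℝ) : ℂ)) * (star u * X * w)) * star w := by
          rw [← hww']; simp only [Matrix.mul_assoc]
  have EXB : X * B = u * (Y * Matrix.diagonal (fun i => ((e i : ℝ) : ℂ))) * star w := by
    rw [hBspec, hY_def]
    calc X * (w * Matrix.diagonal (fun i => ((e i : ℝ) : ℂ)) * star w)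
        = 1 * (X * (w * Matrix.diagonal (fun i => ((e i : ℝ) : ℂ)) * star w)) := by
          rw [Matrix.one_mul]
      _ = u * (star u * X * w * Matrix.diagonal (fun i => ((e i : ℝ) : ℂ))) * star w := by
          rw [← huu']; simp only [Matrix.mul_assoc]
  have EP : ∀ t s : ℝ, mrpow A t * X * mrpow B s
      = u * (Matrix.diagonal (fun i => ((d i ^ t : ℝ) : ℂ)) * Y
          * Matrix.diagonal (fun i => ((e i ^ s : ℝ) : ℂ))) * star w := by
    intro t s
    rw [hmrA, hmrB, hY_def]
    simp only [Matrix.mul_assoc]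
  -- frobSq formulas
  have F1 : frobSq (((1 - v : ℝ) : ℂ) • (A * X) + ((v : ℝ) : ℂ) • (X * B))
      = ∑ i : Fin n, ∑ j : Fin n,
          ((1-v) * d i + v * e j)^2 * ‖Y i j‖ ^ 2 := by
    have hEq : ((1 - v : ℝ) : ℂ) • (A * X) + ((v : ℝ) : ℂ) • (X * B)
        = u * (((1 - v : ℝ) : ℂ) • (Matrix.diagonal (fun i => ((d i : ℝ) : ℂ)) * Y)
            + ((v : ℝ) : ℂ) • (Y * Matrix.diagonal (fun i => ((e i : ℝ) : ℂ)))) * star w := by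
      rw [EAX, EXB, Matrix.mul_add, Matrix.add_mul, Matrix.mul_smul, Matrix.smul_mul,
        Matrix.mul_smul, Matrix.smul_mul]
    rw [hEq, frobSq_conj huu hww]
    unfold frobSq
    refine Finset.sum_congr rfl fun i _ => Finset.sum_congr rfl fun j _ => ?_
    simp only [Matrix.add_apply, Matrix.smul_apply, Matrix.diagonal_mul, Matrix.mul_diagonal,
      smul_eq_mul]
    rw [show ((1 - v : ℝ) : ℂ) * (((d i : ℝ):ℂ) * Y i j) + ((v:ℝ):ℂ) * (Y i j * ((e j : ℝ):ℂ))
        = ((((1-v) * d i + v * e j : ℝ)) : ℂ) * Y i j by push_cast; ring]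
    rw [norm_mul, Complex.norm_real, Real.norm_eq_abs, mul_pow, sq_abs]
  have F2 : frobSq (A * X - X * B)
      = ∑ i : Fin n, ∑ j : Fin n, (d i - e j)^2 * ‖Y i j‖ ^ 2 := by
    have hEq : A * X - X * B
        = u * (Matrix.diagonal (fun i => ((d i : ℝ) : ℂ)) * Y
            - Y * Matrix.diagonal (fun i => ((e i : ℝ) : ℂ))) * star w := by
      rw [EAX, EXB, ← Matrix.sub_mul, ← Matrix.mul_sub]
    rw [hEq, frobSq_conj huu hww]
    unfold frobSq
    refine Finset.sum_congr rfl fun i _ => Finset.sum_congr rfl fun j _ => ?_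
    simp only [Matrix.sub_apply, Matrix.diagonal_mul, Matrix.mul_diagonal]
    rw [show ((d i : ℝ):ℂ) * Y i j - Y i j * ((e j : ℝ):ℂ)
        = (((d i - e j : ℝ)) : ℂ) * Y i j by push_cast; ring]
    rw [norm_mul, Complex.norm_real, Real.norm_eq_abs, mul_pow, sq_abs]
  have F3 : frobSq (mrpow A (1 / 2) * X * mrpow B (1 / 2) - A * X)
      = ∑ i : Fin n, ∑ j : Fin n,
          (d i ^ ((1:ℝ)/2) * e j ^ ((1:ℝ)/2) - d i)^2 * ‖Y i j‖ ^ 2 := by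
    have hEq : mrpow A (1 / 2) * X * mrpow B (1 / 2) - A * X
        = u * (Matrix.diagonal (fun i => ((d i ^ ((1:ℝ)/2) : ℝ) : ℂ)) * Y
            * Matrix.diagonal (fun i => ((e i ^ ((1:ℝ)/2) : ℝ) : ℂ))
            - Matrix.diagonal (fun i => ((d i : ℝ) : ℂ)) * Y) * star w := by
      rw [EP, EAX, ← Matrix.sub_mul, ← Matrix.mul_sub]
    rw [hEq, frobSq_conj huu hww]
    unfold frobSq
    refine Finset.sum_congr rfl fun i _ => Finset.sum_congr rfl fun j _ => ?_
    simp only [Matrix.sub_apply, Matrix.diagonal_mul, Matrix.mul_diagonal]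
    rw [show ((d i ^ ((1:ℝ)/2) : ℝ):ℂ) * Y i j * ((e j ^ ((1:ℝ)/2) : ℝ):ℂ)
          - ((d i : ℝ):ℂ) * Y i j
        = (((d i ^ ((1:ℝ)/2) * e j ^ ((1:ℝ)/2) - d i : ℝ)) : ℂ) * Y i j by push_cast; ring]
    rw [norm_mul, Complex.norm_real, Real.norm_eq_abs, mul_pow, sq_abs]
  have F4 : frobSq (mrpow A (1 - v) * X * mrpow B v)
      = ∑ i : Fin n, ∑ j : Fin n,
          (d i ^ (1-v) * e j ^ v)^2 * ‖Y i j‖ ^ 2 := by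
    have hEq : mrpow A (1 - v) * X * mrpow B v
        = u * (Matrix.diagonal (fun i => ((d i ^ (1-v) : ℝ) : ℂ)) * Y
            * Matrix.diagonal (fun i => ((e i ^ v : ℝ) : ℂ))) * star w := EP (1-v) v
    rw [hEq, frobSq_conj huu hww]
    unfold frobSq
    refine Finset.sum_congr rfl fun i _ => Finset.sum_congr rfl fun j _ => ?_
    simp only [Matrix.diagonal_mul, Matrix.mul_diagonal]
    rw [show ((d i ^ (1-v) : ℝ):ℂ) * Y i j * ((e j ^ v : ℝ):ℂ)
        = (((d i ^ (1-v) * e j ^ v : ℝ)) : ℂ) * Y i j by push_cast; ring]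
    rw [norm_mul, Complex.norm_real, Real.norm_eq_abs, mul_pow, sq_abs]
  -- Kmin facts
  have hne : Nonempty (Fin n × Fin n) := ⟨(⟨0, hn⟩, ⟨0, hn⟩)⟩
  have hKmin0 : 0 ≤ Kmin := by
    rw [hK]
    refine le_trans zero_le_one (le_csInf (Set.range_nonempty _) ?_)
    rintro x ⟨p, rfl⟩
    exact one_le_Kant (Real.sqrt_pos.2 (div_pos (hd p.1) (he p.2)))
  have hKminle : ∀ i j, Kmin ≤ Kant (Real.sqrt (d i / e j)) := by
    intro i j
    rw [hK]
    exact csInf_le (Set.Finite.bddBelow (Set.finite_range _)) ⟨(i, j), rfl⟩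
  -- pointwise inequality
  have point : ∀ i j,
      r1 * ((d i ^ ((1:ℝ)/2) * e j ^ ((1:ℝ)/2) - d i)^2 * ‖Y i j‖^2)
        + Kmin ^ rh1 * ((d i ^ (1-v) * e j ^ v)^2 * ‖Y i j‖^2)
      ≤ ((1-v) * d i + v * e j)^2 * ‖Y i j‖^2
        - v^2 * ((d i - e j)^2 * ‖Y i j‖^2) := by
    intro i j
    have hsq : d i ^ ((1:ℝ)/2) * e j ^ ((1:ℝ)/2) = Real.sqrt (d i * e j) := by
      rw [Real.sqrt_eq_rpow, Real.mul_rpow (hd i).le (he j).le]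
    have hmain := scalar_main (hd i) (he j) hv0 hv hr1 hrh1 hKmin0 (hKminle i j)
    have ht : (0:ℝ) ≤ ‖Y i j‖^2 := sq_nonneg _
    have h2 := mul_le_mul_of_nonneg_right hmain ht
    rw [hsq]
    nlinarith [h2]
  -- assemble
  rw [F1, F2, F3, F4, ge_iff_le]
  have hsum : ∑ i : Fin n, ∑ j : Fin n,
        (r1 * ((d i ^ ((1:ℝ)/2) * e j ^ ((1:ℝ)/2) - d i)^2 * ‖Y i j‖^2)
          + Kmin ^ rh1 * ((d i ^ (1-v) * e j ^ v)^2 * ‖Y i j‖^2))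
      ≤ ∑ i : Fin n, ∑ j : Fin n,
        (((1-v) * d i + v * e j)^2 * ‖Y i j‖^2
          - v^2 * ((d i - e j)^2 * ‖Y i j‖^2)) :=
    Finset.sum_le_sum fun i _ => Finset.sum_le_sum fun j _ => point i j
  have eL : ∑ i : Fin n, ∑ j : Fin n,
        (r1 * ((d i ^ ((1:ℝ)/2) * e j ^ ((1:ℝ)/2) - d i)^2 * ‖Y i j‖^2)
          + Kmin ^ rh1 * ((d i ^ (1-v) * e j ^ v)^2 * ‖Y i j‖^2))
      = r1 * (∑ i : Fin n, ∑ j : Fin n,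
            (d i ^ ((1:ℝ)/2) * e j ^ ((1:ℝ)/2) - d i)^2 * ‖Y i j‖^2)
        + Kmin ^ rh1 * (∑ i : Fin n, ∑ j : Fin n,
            (d i ^ (1-v) * e j ^ v)^2 * ‖Y i j‖^2) := by
    simp only [Finset.sum_add_distrib, ← Finset.mul_sum]
  have eR : ∑ i : Fin n, ∑ j : Fin n,
        (((1-v) * d i + v * e j)^2 * ‖Y i j‖^2
          - v^2 * ((d i - e j)^2 * ‖Y i j‖^2))
      = (∑ i : Fin n, ∑ j : Fin n, ((1-v) * d i + v * e j)^2 * ‖Y i j‖^2)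
        - v^2 * (∑ i : Fin n, ∑ j : Fin n, (d i - e j)^2 * ‖Y i j‖^2) := by
    simp only [Finset.sum_sub_distrib, ← Finset.mul_sum]
  linarith [hsum, eL.symm, eR.symm]
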